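/- Let ℭ be an atomless Boolean algebra carrying a normalised submeasure μ, let a₀, a₁, ..., aₙ be nonzero elements of ℭ forming a finite partition of unity, and for each i ≤ n let φᵢ be a normalised submeasure on the relative algebra ℭ_{aᵢ} = {b ∈ ℭ : b ≤ aᵢ}. Then ℭ carries a normalised submeasure φ such that φ(a) = μ(aᵢ)·φᵢ(a) whenever i ≤ n and a ≤ aᵢ, and φ(a) = μ(a) whenever a lies in the subalgebra of ℭ generated by {a₀, ..., aₙ}. Moreover, if μ and all the φᵢ take only rational values then so does φ. -/

import Mathlib

/-- `S` is a (Boolean) subalgebra of the Boolean algebra `A`. -/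
def IsBoolSubalgebra {A : Type*} [BooleanAlgebra A] (S : Set A) : Prop :=
  ⊥ ∈ S ∧ ⊤ ∈ S ∧ (∀ x ∈ S, ∀ y ∈ S, x ⊔ y ∈ S) ∧
    (∀ x ∈ S, ∀ y ∈ S, x ⊓ y ∈ S) ∧ (∀ x ∈ S, xᶜ ∈ S)

/-- The subalgebra of `A` generated by a set `G`. -/
def boolGenBy {A : Type*} [BooleanAlgebra A] (G : Set A) : Set A :=
  ⋂₀ {S : Set A | IsBoolSubalgebra S ∧ G ⊆ S}

/-- Gluing a normalised submeasure `μ` on an atomless Boolean algebra `C`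
with normalised submeasures `φ i` on the relative algebras below the members of a finite
partition `a₀, …, aₙ` of unity. -/
theorem statement1 (C : Type*) [BooleanAlgebra C]
    (hatomless : ∀ c : C, ¬ IsAtom c)
    (μ : C → ℝ) (hμ0 : μ ⊥ = 0) (hμ1 : μ ⊤ = 1)
    (hμmono : ∀ b c : C, b ≤ c → μ b ≤ μ c)
    (hμsub : ∀ b c : C, μ (b ⊔ c) ≤ μ b + μ c)
    (n : ℕ) (a : Fin (n + 1) → C)
    (hane : ∀ i, a i ≠ ⊥)
    (hadisj : ∀ i j, i ≠ j → a i ⊓ a j = ⊥)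
    (hasup : Finset.univ.sup a = ⊤)
    (φ : Fin (n + 1) → C → ℝ)
    (hφ0 : ∀ i, φ i ⊥ = 0)
    (hφ1 : ∀ i, φ i (a i) = 1)
    (hφmono : ∀ i, ∀ b c : C, b ≤ c → c ≤ a i → φ i b ≤ φ i c)
    (hφsub : ∀ i, ∀ b c : C, b ≤ a i → c ≤ a i → φ i (b ⊔ c) ≤ φ i b + φ i c) :
    ∃ ψ : C → ℝ,
      ψ ⊥ = 0 ∧ ψ ⊤ = 1 ∧
      (∀ b c : C, b ≤ c → ψ b ≤ ψ c) ∧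
      (∀ b c : C, ψ (b ⊔ c) ≤ ψ b + ψ c) ∧
      (∀ i, ∀ b ≤ a i, ψ b = μ (a i) * φ i b) ∧
      (∀ b ∈ boolGenBy (Set.range a), ψ b = μ b) ∧
      ((∀ b : C, ∃ q : ℚ, μ b = (q : ℝ)) → (∀ i, ∀ b ≤ a i, ∃ q : ℚ, φ i b = (q : ℝ)) →
        ∀ b : C, ∃ q : ℚ, ψ b = (q : ℝ)) := by
  classical
  have hμnn : ∀ b : C, 0 ≤ μ b := fun b => hμ0 ▸ hμmono ⊥ b bot_le
  have hφnn : ∀ i, ∀ b : C, b ≤ a i → 0 ≤ φ i b :=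
    fun i b hb => (hφ0 i) ▸ hφmono i ⊥ b bot_le hb
  have hφle1 : ∀ i, ∀ b : C, b ≤ a i → φ i b ≤ 1 :=
    fun i b hb => (hφ1 i) ▸ hφmono i b (a i) hb le_rfl
  set c : Finset (Fin (n + 1)) → C := fun S => S.sup a with hcdef
  have hcmono : ∀ {S T : Finset (Fin (n + 1))}, S ⊆ T → c S ≤ c T :=
    fun h => Finset.sup_mono h
  have hai : ∀ {i : Fin (n + 1)} {S}, i ∈ S → a i ≤ c S := fun h => Finset.le_sup h
  have hcmeet : ∀ S T, c S ⊓ c T = c (S ∩ T) := by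
    intro S T
    apply le_antisymm
    · rw [show c S ⊓ c T = S.sup (fun i => a i ⊓ c T) from Finset.sup_inf_distrib_right S a (c T)]
      apply Finset.sup_le
      intro i hi
      rw [show a i ⊓ c T = T.sup (fun j => a i ⊓ a j) from Finset.sup_inf_distrib_left T a (a i)]
      apply Finset.sup_le
      intro j hj
      rcases eq_or_ne i j with rfl | hne
      · simpa using hai (Finset.mem_inter.2 ⟨hi, hj⟩)
      · rw [hadisj i j hne]; exact bot_le
    · exact le_inf (hcmono Finset.inter_subset_left) (hcmono Finset.inter_subset_right)
  have hcunion : ∀ S T, c (S ∪ T) = c S ⊔ c T := fun S T => Finset.sup_union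
  have hcempty : c ∅ = ⊥ := Finset.sup_empty
  have hcuniv : c Finset.univ = ⊤ := hasup
  have hconotmem : ∀ {i : Fin (n + 1)} {S}, i ∉ S → ∀ b : C, b ≤ c S → b ⊓ a i = ⊥ := by
    intro i S hi b hb
    have h1 : b ⊓ a i ≤ c S ⊓ c {i} := inf_le_inf hb (by simp [c])
    rw [hcmeet, Finset.inter_singleton_of_notMem hi, hcempty] at h1
    exact le_bot_iff.1 h1
  have hcmem : ∀ {i : Fin (n + 1)} {S}, i ∈ S → c S ⊓ a i = a i := by
    intro i S hi
    exact inf_eq_right.2 (hai hi)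
  have hμsup : ∀ S : Finset (Fin (n + 1)), μ (c S) ≤ ∑ i ∈ S, μ (a i) := by
    intro S
    induction S using Finset.induction_on with
    | empty => simp [c, hμ0]
    | @insert x S hx ih =>
      rw [Finset.sum_insert hx]
      calc μ (c (insert x S)) = μ (a x ⊔ c S) := by
            rw [show c (insert x S) = a x ⊔ c S from Finset.sup_insert]
        _ ≤ μ (a x) + μ (c S) := hμsub _ _
        _ ≤ μ (a x) + ∑ i ∈ S, μ (a i) := by linarith
  set g : Finset (Fin (n + 1)) → C → ℝ :=
    fun S b => μ (c S) + ∑ i ∈ Sᶜ, μ (a i) * φ i (b ⊓ a i) with hgdef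
  have hne' : (Finset.univ : Finset (Finset (Fin (n + 1)))).Nonempty := Finset.univ_nonempty
  set ψ : C → ℝ := fun b => Finset.univ.inf' hne' (fun S => g S b) with hψdef
  have hψle : ∀ S b, ψ b ≤ g S b := fun S b => Finset.inf'_le _ (Finset.mem_univ S)
  have hleψ : ∀ b (r : ℝ), (∀ S, r ≤ g S b) → r ≤ ψ b :=
    fun b r h => Finset.le_inf' _ _ (fun S _ => h S)
  have hψex : ∀ b, ∃ S, ψ b = g S b := by
    intro b
    obtain ⟨S, _, hS⟩ := Finset.exists_mem_eq_inf' hne' (fun S => g S b)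
    exact ⟨S, hS⟩
  -- value on elements below a i
  have hval : ∀ i, ∀ b ≤ a i, ψ b = μ (a i) * φ i b := by
    intro i b hb
    have hbj : ∀ j : Fin (n + 1), j ≠ i → b ⊓ a j = ⊥ := by
      intro j hj
      have h := inf_le_inf_right (a j) hb
      rw [hadisj i j (Ne.symm hj)] at h
      exact le_bot_iff.1 h
    apply le_antisymm
    · calc ψ b ≤ g ∅ b := hψle ∅ b
        _ = μ (a i) * φ i b := by
          simp only [hgdef, hcempty, hμ0, Finset.compl_empty, zero_add]
          rw [Finset.sum_eq_single i]
          · rw [inf_eq_left.2 hb]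
          · intro j _ hj
            rw [hbj j hj, hφ0, mul_zero]
          · simp
    · apply hleψ
      intro S
      simp only [hgdef]
      have hsumnn : (0:ℝ) ≤ ∑ j ∈ Sᶜ, μ (a j) * φ j (b ⊓ a j) :=
        Finset.sum_nonneg fun j _ => mul_nonneg (hμnn _) (hφnn j _ inf_le_right)
      by_cases hi : i ∈ S
      · have h1 : μ (a i) * φ i b ≤ μ (a i) := by
          nlinarith [hφle1 i b hb, hφnn i b hb, hμnn (a i)]
        have h2 : μ (a i) ≤ μ (c S) := hμmono _ _ (hai hi)
        linarith
      · have hsum : ∑ j ∈ Sᶜ, μ (a j) * φ j (b ⊓ a j) = μ (a i) * φ i b := by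
          rw [Finset.sum_eq_single i]
          · rw [inf_eq_left.2 hb]
          · intro j _ hj
            rw [hbj j hj, hφ0, mul_zero]
          · intro h
            exact absurd (Finset.mem_compl.2 hi) h
        rw [hsum]
        have := hμnn (c S)
        linarith
  -- value on the generated subalgebra
  have hvalc : ∀ S, ψ (c S) = μ (c S) := by
    intro S
    apply le_antisymm
    · calc ψ (c S) ≤ g S (c S) := hψle S (c S)
        _ = μ (c S) := by
          simp only [hgdef]
          have hz : ∑ i ∈ Sᶜ, μ (a i) * φ i (c S ⊓ a i) = 0 :=
            Finset.sum_eq_zero fun i hi => by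
              rw [hconotmem (Finset.mem_compl.1 hi) (c S) le_rfl, hφ0, mul_zero]
          rw [hz, add_zero]
    · apply hleψ
      intro T
      simp only [hgdef]
      have hsub : S \ T ⊆ Tᶜ := fun i hi => Finset.mem_compl.2 (Finset.mem_sdiff.1 hi).2
      have hsum : ∑ i ∈ Tᶜ, μ (a i) * φ i (c S ⊓ a i) = ∑ i ∈ S \ T, μ (a i) := by
        have h1 : ∑ i ∈ S \ T, (fun i => μ (a i) * φ i (c S ⊓ a i)) i
            = ∑ i ∈ Tᶜ, (fun i => μ (a i) * φ i (c S ⊓ a i)) i := by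
          apply Finset.sum_subset hsub
          intro i hi hi2
          have his : i ∉ S := fun h => hi2 (Finset.mem_sdiff.2 ⟨h, Finset.mem_compl.1 hi⟩)
          show μ (a i) * φ i (c S ⊓ a i) = 0
          rw [hconotmem his (c S) le_rfl, hφ0, mul_zero]
        rw [← h1]
        apply Finset.sum_congr rfl
        intro i hi
        show μ (a i) * φ i (c S ⊓ a i) = μ (a i)
        rw [hcmem (Finset.mem_sdiff.1 hi).1, hφ1, mul_one]
      rw [hsum]
      have h1 : μ (c S) ≤ μ (c T ⊔ c (S \ T)) := by
        rw [← hcunion]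
        refine hμmono _ _ (hcmono fun x hx => ?_)
        by_cases hxT : x ∈ T
        · exact Finset.mem_union_left _ hxT
        · exact Finset.mem_union_right _ (Finset.mem_sdiff.2 ⟨hx, hxT⟩)
      have h2 := hμsub (c T) (c (S \ T))
      have h3 := hμsup (S \ T)
      linarith
  have hgen : ∀ b ∈ boolGenBy (Set.range a), ψ b = μ b := by
    intro b hb
    have hsub : boolGenBy (Set.range a) ⊆ Set.range c := by
      apply Set.sInter_subset_of_mem
      constructor
      · refine ⟨⟨∅, hcempty⟩, ⟨Finset.univ, hcuniv⟩, ?_, ?_, ?_⟩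
        · rintro x ⟨S, rfl⟩ y ⟨T, rfl⟩
          exact ⟨S ∪ T, hcunion S T⟩
        · rintro x ⟨S, rfl⟩ y ⟨T, rfl⟩
          exact ⟨S ∩ T, (hcmeet S T).symm⟩
        · rintro x ⟨S, rfl⟩
          refine ⟨Sᶜ, ?_⟩
          have hic : IsCompl (c S) (c Sᶜ) := by
            constructor
            · rw [disjoint_iff, hcmeet, Finset.inter_compl, hcempty]
            · rw [codisjoint_iff, ← hcunion, Finset.union_compl, hcuniv]
          exact hic.compl_eq.symm
      · rintro x ⟨i, rfl⟩
        exact ⟨{i}, Finset.sup_singleton⟩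
    obtain ⟨S, rfl⟩ := hsub hb
    exact hvalc S
  refine ⟨ψ, ?_, ?_, ?_, ?_, hval, hgen, ?_⟩
  · have h := hvalc ∅
    rwa [hcempty, hμ0] at h
  · have h := hvalc Finset.univ
    rwa [hcuniv, hμ1] at h
  · intro b d hbd
    apply hleψ
    intro S
    calc ψ b ≤ g S b := hψle S b
      _ ≤ g S d := by
        simp only [hgdef]
        apply add_le_add_right
        apply Finset.sum_le_sum
        intro i _
        exact mul_le_mul_of_nonneg_left
          (hφmono i _ _ (inf_le_inf_right _ hbd) inf_le_right) (hμnn _)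
  · intro b d
    obtain ⟨Sb, hSb⟩ := hψex b
    obtain ⟨Sd, hSd⟩ := hψex d
    calc ψ (b ⊔ d) ≤ g (Sb ∪ Sd) (b ⊔ d) := hψle _ _
      _ ≤ g Sb b + g Sd d := by
        simp only [hgdef]
        have h1 : μ (c (Sb ∪ Sd)) ≤ μ (c Sb) + μ (c Sd) := by
          rw [hcunion]; exact hμsub _ _
        have h2 : ∑ i ∈ (Sb ∪ Sd)ᶜ, μ (a i) * φ i ((b ⊔ d) ⊓ a i) ≤
            (∑ i ∈ Sbᶜ, μ (a i) * φ i (b ⊓ a i)) + ∑ i ∈ Sdᶜ, μ (a i) * φ i (d ⊓ a i) := by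
          have h3 : ∀ i : Fin (n+1), μ (a i) * φ i ((b ⊔ d) ⊓ a i) ≤
              μ (a i) * φ i (b ⊓ a i) + μ (a i) * φ i (d ⊓ a i) := by
            intro i
            rw [← mul_add]
            apply mul_le_mul_of_nonneg_left _ (hμnn _)
            rw [inf_sup_right]
            exact hφsub i _ _ inf_le_right inf_le_right
          calc ∑ i ∈ (Sb ∪ Sd)ᶜ, μ (a i) * φ i ((b ⊔ d) ⊓ a i)
              ≤ ∑ i ∈ (Sb ∪ Sd)ᶜ, (μ (a i) * φ i (b ⊓ a i) + μ (a i) * φ i (d ⊓ a i)) :=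
                Finset.sum_le_sum fun i _ => h3 i
            _ = (∑ i ∈ (Sb ∪ Sd)ᶜ, μ (a i) * φ i (b ⊓ a i)) +
                ∑ i ∈ (Sb ∪ Sd)ᶜ, μ (a i) * φ i (d ⊓ a i) := Finset.sum_add_distrib
            _ ≤ (∑ i ∈ Sbᶜ, μ (a i) * φ i (b ⊓ a i)) +
                ∑ i ∈ Sdᶜ, μ (a i) * φ i (d ⊓ a i) :=
                add_le_add
                  (Finset.sum_le_sum_of_subset_of_nonneg
                    (Finset.compl_subset_compl.2 Finset.subset_union_left)
                    fun i _ _ => mul_nonneg (hμnn _) (hφnn i _ inf_le_right))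
                  (Finset.sum_le_sum_of_subset_of_nonneg
                    (Finset.compl_subset_compl.2 Finset.subset_union_right)
                    fun i _ _ => mul_nonneg (hμnn _) (hφnn i _ inf_le_right))
        linarith
      _ = ψ b + ψ d := by rw [hSb, hSd]
  · intro hrμ hrφ b
    choose qμ hqμ using hrμ
    choose qφ hqφ using hrφ
    obtain ⟨S, hS⟩ := hψex b
    refine ⟨qμ (c S) + ∑ i ∈ Sᶜ, qμ (a i) * qφ i (b ⊓ a i) inf_le_right, ?_⟩
    rw [hS]
    simp only [hgdef]
    push_cast
    refine congrArg₂ (· + ·) (hqμ _) (Finset.sum_congr rfl fun i _ => ?_)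
    rw [hqμ, hqφ]
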